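/- Define \lambda_n^{\pm} = (N/2)( r^2 + (n+1)/N \pm \sqrt{ ((n+1)/N - r^2)^2 + 4 r^2/N } ) for 0 \le n \le N-2 and r > 0. Then lim_{N \to \infty} (1/N) \sum_{n=0}^{N-2} ln(\lambda_n^+ / N) = \int_0^1 ln(max\{r^2, t\}) dt, which equals r^2 - 1 if 0 < r \le 1 and ln(r^2) if r \ge 1. -/

import Mathlib

open Finset Filter Real

private lemma sqrt_add_le' {a b : ℝ} (ha : 0 ≤ a) (hb : 0 ≤ b) :
    Real.sqrt (a + b) ≤ Real.sqrt a + Real.sqrt b := by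
  have h1 : a + b ≤ (Real.sqrt a + Real.sqrt b) ^ 2 := by
    have := Real.sq_sqrt ha
    have := Real.sq_sqrt hb
    have := Real.sqrt_nonneg a
    have := Real.sqrt_nonneg b
    nlinarith [mul_nonneg (Real.sqrt_nonneg a) (Real.sqrt_nonneg b)]
  calc Real.sqrt (a + b) ≤ Real.sqrt ((Real.sqrt a + Real.sqrt b) ^ 2) :=
        Real.sqrt_le_sqrt h1
    _ = Real.sqrt a + Real.sqrt b := Real.sqrt_sq (by positivity)

private lemma half_max (a b : ℝ) : (a + b + |b - a|) / 2 = max a b := by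
  rcases le_total a b with h | h
  · rw [abs_of_nonneg (by linarith), max_eq_right h]; ring
  · rw [abs_of_nonpos (by linarith), max_eq_left h]; ring

theorem stmt_17 (r : ℝ) (hr : 0 < r) :
    Tendsto (fun N : ℕ =>
        (1 / (N : ℝ)) * ∑ n ∈ range (N - 1),
          Real.log ((((N : ℝ) / 2) *
              (r ^ 2 + ((n : ℝ) + 1) / N +
                Real.sqrt ((((n : ℝ) + 1) / N - r ^ 2) ^ 2 + 4 * r ^ 2 / N))) / N))
        atTop (nhds (∫ t in (0:ℝ)..1, Real.log (max (r ^ 2) t))) ∧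
      (r ≤ 1 → (∫ t in (0:ℝ)..1, Real.log (max (r ^ 2) t)) = r ^ 2 - 1) ∧
      (1 ≤ r → (∫ t in (0:ℝ)..1, Real.log (max (r ^ 2) t)) = Real.log (r ^ 2)) := by
  have h0 : (0:ℝ) < r ^ 2 := by positivity
  have hm : Monotone fun t : ℝ => Real.log (max (r ^ 2) t) := fun x y hxy =>
    Real.log_le_log (lt_of_lt_of_le h0 (le_max_left _ _)) (max_le_max le_rfl hxy)
  have hint : ∀ a b : ℝ, IntervalIntegrable (fun t => Real.log (max (r ^ 2) t))
      MeasureTheory.volume a b := fun a b => hm.intervalIntegrable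
  refine ⟨?_, ?_, ?_⟩
  · set f : ℝ → ℝ := fun t => Real.log (max (r ^ 2) t) with hfdef
    set I : ℝ := ∫ t in (0:ℝ)..1, f t with hIdef
    set M : ℝ := |Real.log (r ^ 2)| + |Real.log (max (r ^ 2) 1)| with hMdef
    have hfbound : ∀ x ∈ Set.Icc (0:ℝ) 1, |f x| ≤ M := by
      intro x hx
      have l1 : Real.log (r ^ 2) ≤ f x := Real.log_le_log h0 (le_max_left _ _)
      have l2 : f x ≤ Real.log (max (r ^ 2) 1) := hm hx.2
      rw [abs_le]
      constructor
      · have := neg_abs_le (Real.log (r ^ 2))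
        have := abs_nonneg (Real.log (max (r ^ 2) 1))
        simp only [hMdef]; linarith
      · have := le_abs_self (Real.log (max (r ^ 2) 1))
        have := abs_nonneg (Real.log (r ^ 2))
        simp only [hMdef]; linarith
    apply tendsto_of_tendsto_of_tendsto_of_le_of_le'
      (g := fun N : ℕ => I - M * (1 / (N : ℝ)))
      (h := fun N : ℕ => I + M * (1 / (N : ℝ)) + (1 / r) * Real.sqrt (1 / (N : ℝ)))
    · simpa using tendsto_const_nhds.sub (tendsto_one_div_atTop_nhds_zero_nat.const_mul M)
    · have hs : Tendsto (fun N : ℕ => Real.sqrt (1 / (N : ℝ))) atTop (nhds 0) := by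
        have h := (Real.continuous_sqrt.tendsto 0).comp tendsto_one_div_atTop_nhds_zero_nat
        simp only [Function.comp_def, Real.sqrt_zero] at h
        exact h
      simpa using (tendsto_const_nhds.add
        (tendsto_one_div_atTop_nhds_zero_nat.const_mul M)).add (hs.const_mul (1 / r))
    · -- lower bound, eventually
      filter_upwards [eventually_ge_atTop 1] with N hN
      have hN0 : (0:ℝ) < N := by exact_mod_cast hN
      have hNne : (N:ℝ) ≠ 0 := ne_of_gt hN0
      have hcast : ((N - 1 : ℕ) : ℝ) = (N : ℝ) - 1 := by
        rw [Nat.cast_sub hN, Nat.cast_one]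
      set c : ℝ := ((N - 1 : ℕ) : ℝ) / N with hcdef
      have hc0 : 0 ≤ c := by positivity
      have hc1 : c ≤ 1 := by
        rw [hcdef, hcast, div_le_one hN0]; linarith
      have h1c : 1 - c = 1 / N := by
        rw [hcdef, hcast]; field_simp; ring
      -- step 1 : I - M/N ≤ ∫_0^c f
      have hsplit : (∫ x in (0:ℝ)..c, f x) + ∫ x in c..(1:ℝ), f x = I :=
        intervalIntegral.integral_add_adjacent_intervals (hint 0 c) (hint c 1)
      have htail : |∫ x in c..(1:ℝ), f x| ≤ M * (1 / N) := by
        have := intervalIntegral.norm_integral_le_of_norm_le_const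
          (C := M) (f := f) (a := c) (b := 1) ?_
        · rwa [Real.norm_eq_abs, show |1 - c| = 1 / N by rw [abs_of_nonneg (by linarith)]; linarith] at this
        · intro x hx
          rw [Set.uIoc_of_le hc1] at hx
          exact hfbound x ⟨le_trans hc0 (le_of_lt hx.1), hx.2⟩
      have hstep1 : I - M * (1 / N) ≤ ∫ x in (0:ℝ)..c, f x := by
        have h5 := le_abs_self (∫ x in c..(1:ℝ), f x)
        linarith
      -- step 2 : ∫_0^c f ≤ (1/N) * Riemann sum
      have hmono2 : MonotoneOn (fun x : ℝ => f (x / N)) (Set.Icc (0:ℝ) (0 + (N - 1 : ℕ))) :=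
        (hm.comp (fun x y hxy => by gcongr)).monotoneOn _
      have hrs := hmono2.integral_le_sum
      rw [intervalIntegral.integral_comp_div (f := f) hNne] at hrs
      simp only [zero_add, zero_div, smul_eq_mul] at hrs
      have hstep2 : (∫ x in (0:ℝ)..c, f x) ≤ (1 / N) * ∑ i ∈ range (N - 1), f ((↑(i + 1) : ℝ) / N) := by
        rw [← hcdef] at hrs
        calc (∫ x in (0:ℝ)..c, f x) = (1 / N) * ((N:ℝ) * ∫ x in (0:ℝ)..c, f x) := by
              field_simp
          _ ≤ (1 / N) * ∑ i ∈ range (N - 1), f ((↑(i + 1) : ℝ) / N) := by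
              apply mul_le_mul_of_nonneg_left hrs (by positivity)
      -- step 3 : per-term comparison
      have hterm : ∀ n ∈ range (N - 1), f ((↑(n + 1) : ℝ) / N) ≤
          Real.log ((((N : ℝ) / 2) * (r ^ 2 + ((n : ℝ) + 1) / N +
            Real.sqrt ((((n : ℝ) + 1) / N - r ^ 2) ^ 2 + 4 * r ^ 2 / N))) / N) := by
        intro n _
        have hct : (↑(n + 1) : ℝ) = (n : ℝ) + 1 := by push_cast; ring
        rw [hct]
        set t : ℝ := ((n : ℝ) + 1) / N with htdef
        have ht0 : 0 < t := by positivity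
        have harg : (((N : ℝ) / 2) * (r ^ 2 + t + Real.sqrt ((t - r ^ 2) ^ 2 + 4 * r ^ 2 / N))) / N
            = (r ^ 2 + t + Real.sqrt ((t - r ^ 2) ^ 2 + 4 * r ^ 2 / N)) / 2 := by
          field_simp
        rw [harg]
        apply Real.log_le_log (lt_of_lt_of_le h0 (le_max_left _ _))
        have hs2 : |t - r ^ 2| ≤ Real.sqrt ((t - r ^ 2) ^ 2 + 4 * r ^ 2 / N) := by
          rw [← Real.sqrt_sq_eq_abs]
          apply Real.sqrt_le_sqrt
          have : (0:ℝ) ≤ 4 * r ^ 2 / N := by positivity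
          linarith
        rw [← half_max]
        linarith
      have hsum : ∑ i ∈ range (N - 1), f ((↑(i + 1) : ℝ) / N) ≤
          ∑ n ∈ range (N - 1), Real.log ((((N : ℝ) / 2) * (r ^ 2 + ((n : ℝ) + 1) / N +
            Real.sqrt ((((n : ℝ) + 1) / N - r ^ 2) ^ 2 + 4 * r ^ 2 / N))) / N) :=
        Finset.sum_le_sum hterm
      calc I - M * (1 / N) ≤ ∫ x in (0:ℝ)..c, f x := hstep1
        _ ≤ (1 / N) * ∑ i ∈ range (N - 1), f ((↑(i + 1) : ℝ) / N) := hstep2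
        _ ≤ _ := mul_le_mul_of_nonneg_left hsum (by positivity)
    · -- upper bound, eventually
      filter_upwards [eventually_ge_atTop 1] with N hN
      have hN0 : (0:ℝ) < N := by exact_mod_cast hN
      have hNne : (N:ℝ) ≠ 0 := ne_of_gt hN0
      set ε : ℝ := r * Real.sqrt (1 / (N : ℝ)) with hεdef
      have hε : 0 ≤ ε := by positivity
      -- per-term comparison
      have hterm : ∀ n ∈ range (N - 1),
          Real.log ((((N : ℝ) / 2) * (r ^ 2 + ((n : ℝ) + 1) / N +
            Real.sqrt ((((n : ℝ) + 1) / N - r ^ 2) ^ 2 + 4 * r ^ 2 / N))) / N) ≤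
          f (((n : ℝ) + 1) / N) + (1 / r) * Real.sqrt (1 / (N : ℝ)) := by
        intro n _
        set t : ℝ := ((n : ℝ) + 1) / N with htdef
        have ht0 : 0 < t := by positivity
        have harg : (((N : ℝ) / 2) * (r ^ 2 + t + Real.sqrt ((t - r ^ 2) ^ 2 + 4 * r ^ 2 / N))) / N
            = (r ^ 2 + t + Real.sqrt ((t - r ^ 2) ^ 2 + 4 * r ^ 2 / N)) / 2 := by
          field_simp
        rw [harg]
        set s : ℝ := Real.sqrt ((t - r ^ 2) ^ 2 + 4 * r ^ 2 / N) with hsdef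
        have hs0 : 0 ≤ s := Real.sqrt_nonneg _
        have hb : Real.sqrt (4 * r ^ 2 / N) = 2 * ε := by
          rw [show 4 * r ^ 2 / (N:ℝ) = (2 * ε) ^ 2 by
            rw [hεdef, mul_pow, mul_pow, Real.sq_sqrt (by positivity)]; field_simp; ring]
          exact Real.sqrt_sq (by positivity)
        have hsu : s ≤ |t - r ^ 2| + 2 * ε := by
          rw [hsdef]
          calc Real.sqrt ((t - r ^ 2) ^ 2 + 4 * r ^ 2 / N)
              ≤ Real.sqrt ((t - r ^ 2) ^ 2) + Real.sqrt (4 * r ^ 2 / N) :=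
                sqrt_add_le' (by positivity) (by positivity)
            _ = |t - r ^ 2| + 2 * ε := by rw [Real.sqrt_sq_eq_abs, hb]
        have hmaxpos : 0 < max (r ^ 2) t := lt_of_lt_of_le h0 (le_max_left _ _)
        have hXle : (r ^ 2 + t + s) / 2 ≤ max (r ^ 2) t + ε := by
          rw [← half_max]; linarith
        have hlog1 : Real.log ((r ^ 2 + t + s) / 2) ≤ Real.log (max (r ^ 2) t + ε) :=
          Real.log_le_log (by positivity) hXle
        have hkey : Real.log (max (r ^ 2) t + ε) ≤ Real.log (max (r ^ 2) t) + ε / max (r ^ 2) t := by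
          have hpos : (0:ℝ) < (max (r ^ 2) t + ε) / max (r ^ 2) t := by positivity
          have h2 := Real.log_le_sub_one_of_pos hpos
          rw [Real.log_div (by positivity) (ne_of_gt hmaxpos)] at h2
          have h3 : (max (r ^ 2) t + ε) / max (r ^ 2) t - 1 = ε / max (r ^ 2) t := by
            field_simp; ring
          linarith
        have hdiv : ε / max (r ^ 2) t ≤ ε / r ^ 2 := by
          gcongr
          exact le_max_left _ _
        have heq : ε / r ^ 2 = (1 / r) * Real.sqrt (1 / (N : ℝ)) := by
          rw [hεdef]; field_simp
        have : f t = Real.log (max (r ^ 2) t) := rfl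
        linarith
      have hsum : ∑ n ∈ range (N - 1),
          Real.log ((((N : ℝ) / 2) * (r ^ 2 + ((n : ℝ) + 1) / N +
            Real.sqrt ((((n : ℝ) + 1) / N - r ^ 2) ^ 2 + 4 * r ^ 2 / N))) / N) ≤
          (∑ n ∈ range (N - 1), f (((n : ℝ) + 1) / N)) +
            ((N - 1 : ℕ) : ℝ) * ((1 / r) * Real.sqrt (1 / (N : ℝ))) := by
        calc _ ≤ ∑ n ∈ range (N - 1), (f (((n : ℝ) + 1) / N) + (1 / r) * Real.sqrt (1 / (N : ℝ))) :=
              Finset.sum_le_sum hterm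
          _ = _ := by rw [Finset.sum_add_distrib, Finset.sum_const, Finset.card_range,
              nsmul_eq_mul]
      -- Riemann upper bound
      have hmono2 : MonotoneOn (fun x : ℝ => f (x / N)) (Set.Icc (1:ℝ) (1 + (N - 1 : ℕ))) :=
        (hm.comp (fun x y hxy => by gcongr)).monotoneOn _
      have hrs := hmono2.sum_le_integral
      rw [intervalIntegral.integral_comp_div (f := f) hNne] at hrs
      have hcast : ((N - 1 : ℕ) : ℝ) = (N : ℝ) - 1 := by
        rw [Nat.cast_sub hN, Nat.cast_one]
      rw [show (1 + ((N - 1 : ℕ) : ℝ)) / N = 1 by rw [hcast]; field_simp; ring] at hrs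
      simp only [smul_eq_mul] at hrs
      have hrs2 : ∑ i ∈ range (N - 1), f (((i : ℝ) + 1) / N) ≤
          (N : ℝ) * ∫ x in (1/(N:ℝ))..1, f x := by
        refine le_trans (le_of_eq ?_) hrs
        apply Finset.sum_congr rfl
        intro i _
        congr 1
        ring
      -- integral tail bound
      have hsplit : (∫ x in (0:ℝ)..(1/(N:ℝ)), f x) + ∫ x in (1/(N:ℝ))..(1:ℝ), f x = I :=
        intervalIntegral.integral_add_adjacent_intervals (hint _ _) (hint _ _)
      have hinvN1 : 1 / (N:ℝ) ≤ 1 := by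
        rw [div_le_one hN0]; exact_mod_cast hN
      have htail : |∫ x in (0:ℝ)..(1/(N:ℝ)), f x| ≤ M * (1 / N) := by
        have := intervalIntegral.norm_integral_le_of_norm_le_const
          (C := M) (f := f) (a := 0) (b := 1/(N:ℝ)) ?_
        · rwa [Real.norm_eq_abs, show |1/(N:ℝ) - 0| = 1 / N by
            rw [sub_zero, abs_of_nonneg (by positivity)]] at this
        · intro x hx
          rw [Set.uIoc_of_le (by positivity)] at hx
          exact hfbound x ⟨le_of_lt hx.1, le_trans hx.2 hinvN1⟩
      have hItail : (∫ x in (1/(N:ℝ))..(1:ℝ), f x) ≤ I + M * (1 / N) := by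
        have := neg_abs_le (∫ x in (0:ℝ)..(1/(N:ℝ)), f x)
        linarith
      -- combine
      have hNfrac : ((N - 1 : ℕ) : ℝ) / N ≤ 1 := by
        rw [hcast, div_le_one hN0]; linarith
      calc (1 / (N:ℝ)) * ∑ n ∈ range (N - 1),
            Real.log ((((N : ℝ) / 2) * (r ^ 2 + ((n : ℝ) + 1) / N +
              Real.sqrt ((((n : ℝ) + 1) / N - r ^ 2) ^ 2 + 4 * r ^ 2 / N))) / N)
          ≤ (1 / (N:ℝ)) * ((∑ n ∈ range (N - 1), f (((n : ℝ) + 1) / N)) +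
            ((N - 1 : ℕ) : ℝ) * ((1 / r) * Real.sqrt (1 / (N : ℝ)))) :=
            mul_le_mul_of_nonneg_left hsum (by positivity)
        _ ≤ (1 / (N:ℝ)) * ((N : ℝ) * ∫ x in (1/(N:ℝ))..1, f x) +
            (1 / r) * Real.sqrt (1 / (N : ℝ)) := by
            rw [mul_add]
            have e1 : (1 / (N:ℝ)) * (∑ n ∈ range (N - 1), f (((n : ℝ) + 1) / N)) ≤
                (1 / (N:ℝ)) * ((N : ℝ) * ∫ x in (1/(N:ℝ))..1, f x) :=
              mul_le_mul_of_nonneg_left hrs2 (by positivity)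
            have e2 : (1 / (N:ℝ)) * (((N - 1 : ℕ) : ℝ) * ((1 / r) * Real.sqrt (1 / (N : ℝ)))) ≤
                (1 / r) * Real.sqrt (1 / (N : ℝ)) := by
              rw [← mul_assoc]
              have h4 : (1 / (N:ℝ)) * ((N - 1 : ℕ) : ℝ) ≤ 1 := by
                rw [mul_comm, mul_one_div]; exact hNfrac
              nlinarith [Real.sqrt_nonneg (1 / (N:ℝ)), le_of_lt (one_div_pos.mpr hr),
                mul_nonneg (le_of_lt (one_div_pos.mpr hr)) (Real.sqrt_nonneg (1 / (N:ℝ)))]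
            linarith
        _ ≤ I + M * (1 / N) + (1 / r) * Real.sqrt (1 / (N : ℝ)) := by
            rw [show (1 / (N:ℝ)) * ((N : ℝ) * ∫ x in (1/(N:ℝ))..1, f x) =
              ∫ x in (1/(N:ℝ))..1, f x by field_simp]
            linarith
  · intro hr1
    have h1 : r ^ 2 ≤ 1 := by nlinarith
    rw [← intervalIntegral.integral_add_adjacent_intervals (b := r ^ 2) (hint 0 (r ^ 2)) (hint (r ^ 2) 1)]
    have e1 : (∫ t in (0:ℝ)..(r ^ 2), Real.log (max (r ^ 2) t)) = r ^ 2 * Real.log (r ^ 2) := by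
      rw [intervalIntegral.integral_congr (g := fun _ => Real.log (r ^ 2))
        (fun t ht => ?_)]
      · simp; ring
      · rw [Set.uIcc_of_le (le_of_lt h0)] at ht
        simp only [max_eq_left ht.2]
    have e2 : (∫ t in (r ^ 2 : ℝ)..1, Real.log (max (r ^ 2) t)) = 1 * Real.log 1 - r ^ 2 * Real.log (r ^ 2) - 1 + r ^ 2 := by
      rw [intervalIntegral.integral_congr (g := Real.log) (fun t ht => ?_)]
      · exact integral_log
      · rw [Set.uIcc_of_le h1] at ht
        simp only [max_eq_right ht.1]
    rw [e1, e2, Real.log_one]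
    ring
  · intro hr1
    have h1 : (1:ℝ) ≤ r ^ 2 := by nlinarith
    rw [intervalIntegral.integral_congr (g := fun _ => Real.log (r ^ 2)) (fun t ht => ?_)]
    · simp
    · rw [Set.uIcc_of_le zero_le_one] at ht
      simp only [max_eq_left (ht.2.trans h1)]
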